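/- Let σ_1 ≥ … ≥ σ_N > 0, let F = Σ_{i=1}^N σ_i² and Q = Σ_{i=1}^N σ_i⁴, and let α, w > 0. Then Σ_{i=1}^{N} 1/(w σ_i^{-2} + α) ≥ (F²/Q) / ((F²/Q)·w/F + α), i.e., Σ_i 1/(w/σ_i² + α) ≥ srank₄/(srank₄·w/F + α) where srank₄ = F²/Q. -/

import Mathlib

open BigOperators Finset

/-- Jensen step for the stable-rank bound: for `σ_1 ≥ … ≥ σ_N > 0`,
`F = ∑ σ_i²`, `Q = ∑ σ_i⁴` and `α, w > 0`,
`∑_i 1/(w σ_i⁻² + α) ≥ (F²/Q) / ((F²/Q)·w/F + α)`. -/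
theorem jensen_stable_rank
    (N : ℕ) (hN : 0 < N) (σ : ℕ → ℝ)
    (hpos : ∀ i, i < N → 0 < σ i)
    (hmono : ∀ i j, i ≤ j → j < N → σ j ≤ σ i)
    (α w : ℝ) (hα : 0 < α) (hw : 0 < w) :
    ((∑ i ∈ Finset.range N, (σ i) ^ 2) ^ 2 / (∑ i ∈ Finset.range N, (σ i) ^ 4)) /
        (((∑ i ∈ Finset.range N, (σ i) ^ 2) ^ 2 /
              (∑ i ∈ Finset.range N, (σ i) ^ 4)) *
            w / (∑ i ∈ Finset.range N, (σ i) ^ 2) + α)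
      ≤ ∑ i ∈ Finset.range N, 1 / (w * ((σ i) ^ 2)⁻¹ + α) := by
  set F := ∑ i ∈ Finset.range N, (σ i) ^ 2 with hF
  set Q := ∑ i ∈ Finset.range N, (σ i) ^ 4 with hQ
  have hne : (Finset.range N).Nonempty := by
    simpa [Finset.nonempty_range_iff] using hN.ne'
  have hFpos : 0 < F := Finset.sum_pos
    (fun i hi => pow_pos (hpos i (Finset.mem_range.mp hi)) 2) hne
  have hQpos : 0 < Q := Finset.sum_pos
    (fun i hi => pow_pos (hpos i (Finset.mem_range.mp hi)) 4) hne
  have hDpos : 0 < w * F + α * Q := by positivity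
  -- each term rewrites to σ² / (w + α σ²)
  have hterm : ∀ i ∈ Finset.range N,
      1 / (w * ((σ i) ^ 2)⁻¹ + α) = (σ i) ^ 2 / (w + α * (σ i) ^ 2) := by
    intro i hi
    have hs : 0 < (σ i) ^ 2 := pow_pos (hpos i (Finset.mem_range.mp hi)) 2
    have h1 : w * ((σ i) ^ 2)⁻¹ + α ≠ 0 := by positivity
    have h2 : w + α * (σ i) ^ 2 ≠ 0 := by positivity
    field_simp
    rw [mul_add, mul_div_assoc', mul_div_cancel_left₀ w hs.ne']
  rw [Finset.sum_congr rfl hterm]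
  set S := ∑ i ∈ Finset.range N, (σ i) ^ 2 / (w + α * (σ i) ^ 2) with hS
  -- Cauchy–Schwarz: F² ≤ S * (w F + α Q)
  have key : F ^ 2 ≤ S * (w * F + α * Q) := by
    -- use sum_mul_sq_le_sq_mul_sq
    have h := Finset.sum_mul_sq_le_sq_mul_sq (Finset.range N)
      (fun i => σ i / Real.sqrt (w + α * (σ i) ^ 2))
      (fun i => σ i * Real.sqrt (w + α * (σ i) ^ 2))
    have e1 : ∑ i ∈ Finset.range N,
        (σ i / Real.sqrt (w + α * (σ i) ^ 2)) * (σ i * Real.sqrt (w + α * (σ i) ^ 2)) = F := by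
      apply Finset.sum_congr rfl
      intro i hi
      have hs : 0 < (σ i) ^ 2 := pow_pos (hpos i (Finset.mem_range.mp hi)) 2
      have hp : 0 < w + α * (σ i) ^ 2 := by positivity
      have hsq : Real.sqrt (w + α * (σ i) ^ 2) ≠ 0 := by positivity
      field_simp
    have e2 : ∑ i ∈ Finset.range N, (σ i / Real.sqrt (w + α * (σ i) ^ 2)) ^ 2 = S := by
      apply Finset.sum_congr rfl
      intro i hi
      have hs : 0 < (σ i) ^ 2 := pow_pos (hpos i (Finset.mem_range.mp hi)) 2
      have hp : 0 < w + α * (σ i) ^ 2 := by positivity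
      rw [div_pow, Real.sq_sqrt hp.le]
    have e3 : ∑ i ∈ Finset.range N, (σ i * Real.sqrt (w + α * (σ i) ^ 2)) ^ 2
        = w * F + α * Q := by
      rw [Finset.mul_sum, Finset.mul_sum, ← Finset.sum_add_distrib]
      apply Finset.sum_congr rfl
      intro i hi
      have hs : 0 < (σ i) ^ 2 := pow_pos (hpos i (Finset.mem_range.mp hi)) 2
      have hp : 0 < w + α * (σ i) ^ 2 := by positivity
      rw [mul_pow, Real.sq_sqrt hp.le]
      ring
    rw [e1, e2, e3] at h
    exact h
  have lhs_eq : (F ^ 2 / Q) / ((F ^ 2 / Q) * w / F + α) = F ^ 2 / (w * F + α * Q) := by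
    rw [div_eq_div_iff (by positivity) hDpos.ne']
    field_simp
  rw [lhs_eq, div_le_iff₀ hDpos]
  linarith [key]
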